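/- For every ε > 0 and every real s > 0, one has (1 + s^((n-2)/n))^(n/(n-2)) ≤ (1+ε)·s + C_ε, where n ≥ 3 is an integer and C_ε = (1 - (1+ε)^(-(n-2)/2))^(-2/(n-2)). -/

import Mathlib

theorem stmt_0 (n : ℕ) (hn : 3 ≤ n) (ε : ℝ) (hε : 0 < ε) (s : ℝ) (hs : 0 < s) :
    (1 + s ^ (((n : ℝ) - 2) / n)) ^ ((n : ℝ) / ((n : ℝ) - 2)) ≤
      (1 + ε) * s + (1 - (1 + ε) ^ (-(((n : ℝ) - 2) / 2))) ^ (-2 / ((n : ℝ) - 2)) := by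
  set N : ℝ := (n : ℝ) with hNdef
  have hN3 : (3 : ℝ) ≤ N := by rw [hNdef]; exact_mod_cast hn
  have hN2 : (0 : ℝ) < N - 2 := by linarith
  have hN0 : (0 : ℝ) < N := by linarith
  set p : ℝ := N / (N - 2) with hpdef
  have hp1 : 1 ≤ p := by
    rw [hpdef, le_div_iff₀ hN2]; linarith
  set lam : ℝ := (1 + ε) ^ (-((N - 2) / 2)) with hlam
  have h1ε : (1 : ℝ) < 1 + ε := by linarith
  have hlam0 : 0 < lam := Real.rpow_pos_of_pos (by linarith) _
  have hlam1 : lam < 1 := by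
    apply Real.rpow_lt_one_of_one_lt_of_neg h1ε
    have : (0:ℝ) < (N - 2) / 2 := by positivity
    linarith
  have h1m : (0:ℝ) < 1 - lam := by linarith
  set a : ℝ := s ^ ((N - 2) / N) with ha
  have ha0 : 0 < a := Real.rpow_pos_of_pos hs _
  have hconv := (convexOn_rpow hp1).2 (x := a / lam) (y := 1 / (1 - lam))
    (Set.mem_Ici.mpr (by positivity)) (Set.mem_Ici.mpr (by positivity))
    hlam0.le h1m.le (by ring)
  have hsum : lam • (a / lam) + (1 - lam) • (1 / (1 - lam)) = 1 + a := by
    rw [smul_eq_mul, smul_eq_mul, mul_div_cancel₀ _ (ne_of_gt hlam0), mul_one_div,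
      div_self (ne_of_gt h1m)]
    ring
  rw [hsum] at hconv
  have powsub : ∀ x : ℝ, 0 < x → x * x ^ (-p) = x ^ (1 - p) := by
    intro x hx
    rw [show (1 - p : ℝ) = 1 + (-p) by ring, Real.rpow_add hx, Real.rpow_one]
  have key1 : lam • (a / lam) ^ p = (1 + ε) * s := by
    have h1 : (a / lam) ^ p = a ^ p * lam ^ (-p) := by
      rw [Real.div_rpow ha0.le hlam0.le, Real.rpow_neg hlam0.le, div_eq_mul_inv]
    have hap : a ^ p = s := by
      rw [ha, hpdef, ← Real.rpow_mul hs.le]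
      rw [div_mul_div_comm, mul_comm, div_self (by positivity), Real.rpow_one]
    have hlp : lam ^ (1 - p) = 1 + ε := by
      rw [hlam, ← Real.rpow_mul (by linarith)]
      have he : -((N - 2) / 2) * (1 - p) = 1 := by
        rw [hpdef]; field_simp; ring
      rw [he, Real.rpow_one]
    rw [h1, smul_eq_mul, hap]
    calc lam * (s * lam ^ (-p)) = (lam * lam ^ (-p)) * s := by ring
    _ = (1 + ε) * s := by rw [powsub lam hlam0, hlp]
  have key2 : (1 - lam) • (1 / (1 - lam)) ^ p = (1 - lam) ^ (-2 / (N - 2)) := by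
    rw [smul_eq_mul, Real.div_rpow (by norm_num) h1m.le, Real.one_rpow, mul_one_div,
      div_eq_mul_inv, ← Real.rpow_neg h1m.le, powsub _ h1m]
    congr 1
    rw [hpdef]; field_simp; ring
  rw [key1, key2] at hconv
  exact hconv
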